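/- Let f₀(u,v) = (1 + 2√3 v)(1 + 3u − √3 v)(1 − 3u − √3 v) and g = log f₀. Then at every point where f₀ > 0, det Hess(g)(u,v) = 324 (1 + 6u² + 6v²) / f₀(u,v)². -/

import Mathlib

set_option maxHeartbeats 1000000

open Real

/-- Partial derivative in the first variable. -/
noncomputable def pdx (f : ℝ × ℝ → ℝ) (p : ℝ × ℝ) : ℝ :=
  deriv (fun x => f (x, p.2)) p.1

/-- Partial derivative in the second variable. -/
noncomputable def pdy (f : ℝ × ℝ → ℝ) (p : ℝ × ℝ) : ℝ :=
  deriv (fun y => f (p.1, y)) p.2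

/-- The torsion function of the equilateral triangle `T₀`. -/
noncomputable def f0 (p : ℝ × ℝ) : ℝ :=
  (1 + 2 * Real.sqrt 3 * p.2) * (1 + 3 * p.1 - Real.sqrt 3 * p.2)
    * (1 - 3 * p.1 - Real.sqrt 3 * p.2)

/-- `g = log f₀`. -/
noncomputable def g0 (p : ℝ × ℝ) : ℝ := Real.log (f0 p)

lemma hs3 : Real.sqrt 3 ^ 2 = 3 := Real.sq_sqrt (by norm_num)

lemma f0x (y x : ℝ) : HasDerivAt (fun t => f0 (t, y))
    ((1 + 2 * Real.sqrt 3 * y) * (-18 * x)) x := by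
  have h1 : HasDerivAt (fun t : ℝ => 1 + 3 * t - Real.sqrt 3 * y) 3 x := by
    simpa using (((hasDerivAt_id x).const_mul 3).const_add 1).sub_const (Real.sqrt 3 * y)
  have h2 : HasDerivAt (fun t : ℝ => 1 - 3 * t - Real.sqrt 3 * y) (-3) x := by
    simpa using (((hasDerivAt_id x).const_mul 3).const_sub 1).sub_const (Real.sqrt 3 * y)
  have h := ((hasDerivAt_const x (1 + 2 * Real.sqrt 3 * y)).mul h1).mul h2
  simp only [f0]
  simp only [Pi.mul_apply] at h
  exact h.congr_deriv (by ring)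

lemma f0y (x y : ℝ) : HasDerivAt (fun t => f0 (x, t))
    (18 * (Real.sqrt 3 * y ^ 2 - Real.sqrt 3 * x ^ 2 - y)) y := by
  have h0 : HasDerivAt (fun t : ℝ => 1 + 2 * Real.sqrt 3 * t) (2 * Real.sqrt 3) y := by
    simpa using ((hasDerivAt_id y).const_mul (2 * Real.sqrt 3)).const_add 1
  have h1 : HasDerivAt (fun t : ℝ => 1 + 3 * x - Real.sqrt 3 * t) (-(Real.sqrt 3)) y := by
    simpa using (((hasDerivAt_id y).const_mul (Real.sqrt 3)).const_sub (1 + 3 * x))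
  have h2 : HasDerivAt (fun t : ℝ => 1 - 3 * x - Real.sqrt 3 * t) (-(Real.sqrt 3)) y := by
    simpa using (((hasDerivAt_id y).const_mul (Real.sqrt 3)).const_sub (1 - 3 * x))
  have h := (h0.mul h1).mul h2
  simp only [f0]
  have hs : Real.sqrt 3 ^ 2 = 3 := hs3
  simp only [Pi.mul_apply] at h
  exact h.congr_deriv (by linear_combination (6 * Real.sqrt 3 * y ^ 2 - 6 * y) * hs)

lemma pdx_g0 (q : ℝ × ℝ) (hq : f0 q ≠ 0) :
    pdx g0 q = (1 + 2 * Real.sqrt 3 * q.2) * (-18 * q.1) / f0 q := by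
  unfold pdx g0
  exact ((f0x q.2 q.1).log hq).deriv

lemma pdy_g0 (q : ℝ × ℝ) (hq : f0 q ≠ 0) :
    pdy g0 q = 18 * (Real.sqrt 3 * q.2 ^ 2 - Real.sqrt 3 * q.1 ^ 2 - q.2) / f0 q := by
  obtain ⟨a, b⟩ := q
  unfold pdy g0
  exact ((f0y a b).log hq).deriv

lemma frac_helper (a b c d e : ℝ) (hd : d ≠ 0) (h : a * b - c ^ 2 = e * d) :
    a / d * (b / d) - (c / d) ^ 2 = e / d := by
  field_simp
  linear_combination h

/-- At every point where `f₀ > 0`, the determinant of the Hessian of `g = log f₀`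
equals `324 (1 + 6u² + 6v²)/f₀(u,v)²`. -/
theorem det_hessian_log_f0 : ∀ p : ℝ × ℝ, 0 < f0 p →
    pdx (pdx g0) p * pdy (pdy g0) p - pdx (pdy g0) p ^ 2
      = 324 * (1 + 6 * p.1 ^ 2 + 6 * p.2 ^ 2) / f0 p ^ 2 := by
  intro p hp
  have hc : Continuous f0 := by unfold f0; continuity
  have hcx : ContinuousAt (fun x => f0 (x, p.2)) p.1 :=
    (hc.comp (continuous_id.prodMk continuous_const)).continuousAt
  have hcy : ContinuousAt (fun y => f0 (p.1, y)) p.2 :=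
    (hc.comp (continuous_const.prodMk continuous_id)).continuousAt
  have hevx : ∀ᶠ x in nhds p.1, 0 < f0 (x, p.2) :=
    hcx.tendsto.eventually (eventually_gt_nhds hp)
  have hevy : ∀ᶠ y in nhds p.2, 0 < f0 (p.1, y) :=
    hcy.tendsto.eventually (eventually_gt_nhds hp)
  set s := Real.sqrt 3 with hsdef
  have hs : s ^ 2 = 3 := hs3
  -- pdx pdx
  have e1 : (fun x => pdx g0 (x, p.2)) =ᶠ[nhds p.1]
      (fun x => (1 + 2 * s * p.2) * (-18 * x) / f0 (x, p.2)) :=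
    hevx.mono fun x hx => pdx_g0 (x, p.2) hx.ne'
  have hnum1 : HasDerivAt (fun x : ℝ => (1 + 2 * s * p.2) * (-18 * x))
      ((1 + 2 * s * p.2) * (-18)) p.1 := by
    simpa using ((hasDerivAt_id p.1).const_mul (-18 : ℝ)).const_mul (1 + 2 * s * p.2)
  have hxx : pdx (pdx g0) p = ((1 + 2 * s * p.2) * (-18) * f0 p
      - (1 + 2 * s * p.2) * (-18 * p.1) * ((1 + 2 * s * p.2) * (-18 * p.1))) / f0 p ^ 2 := by
    have h1 : pdx (pdx g0) p = deriv (fun x => pdx g0 (x, p.2)) p.1 := rfl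
    rw [h1, e1.deriv_eq]
    exact (hnum1.div (f0x p.2 p.1) hp.ne').deriv
  -- pdy pdy
  have e2 : (fun y => pdy g0 (p.1, y)) =ᶠ[nhds p.2]
      (fun y => 18 * (s * y ^ 2 - s * p.1 ^ 2 - y) / f0 (p.1, y)) :=
    hevy.mono fun y hy => pdy_g0 (p.1, y) hy.ne'
  have hnum2 : HasDerivAt (fun y : ℝ => 18 * (s * y ^ 2 - s * p.1 ^ 2 - y))
      (18 * (2 * s * p.2 - 1)) p.2 := by
    have h := ((((hasDerivAt_pow 2 p.2).const_mul s).sub_const (s * p.1 ^ 2)).sub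
      (hasDerivAt_id p.2)).const_mul 18
    exact h.congr_deriv (by norm_num; ring)
  have hyy : pdy (pdy g0) p = (18 * (2 * s * p.2 - 1) * f0 p
      - 18 * (s * p.2 ^ 2 - s * p.1 ^ 2 - p.2) * (18 * (s * p.2 ^ 2 - s * p.1 ^ 2 - p.2)))
      / f0 p ^ 2 := by
    have h2 : pdy (pdy g0) p = deriv (fun y => pdy g0 (p.1, y)) p.2 := rfl
    rw [h2, e2.deriv_eq]
    exact (hnum2.div (f0y p.1 p.2) hp.ne').deriv
  -- pdx pdy
  have e3 : (fun x => pdy g0 (x, p.2)) =ᶠ[nhds p.1]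
      (fun x => 18 * (s * p.2 ^ 2 - s * x ^ 2 - p.2) / f0 (x, p.2)) :=
    hevx.mono fun x hx => pdy_g0 (x, p.2) hx.ne'
  have hnum3 : HasDerivAt (fun x : ℝ => 18 * (s * p.2 ^ 2 - s * x ^ 2 - p.2))
      (-36 * s * p.1) p.1 := by
    have h := ((((hasDerivAt_pow 2 p.1).const_mul s).const_sub (s * p.2 ^ 2)).sub_const
      p.2).const_mul 18
    exact h.congr_deriv (by norm_num; ring)
  have hxy : pdx (pdy g0) p = (-36 * s * p.1 * f0 p
      - 18 * (s * p.2 ^ 2 - s * p.1 ^ 2 - p.2) * ((1 + 2 * s * p.2) * (-18 * p.1)))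
      / f0 p ^ 2 := by
    have h3 : pdx (pdy g0) p = deriv (fun x => pdy g0 (x, p.2)) p.1 := rfl
    rw [h3, e3.deriv_eq]
    exact (hnum3.div (f0x p.2 p.1) hp.ne').deriv
  rw [hxx, hyy, hxy]
  have hf : f0 p = (1 + 2 * s * p.2) * (1 + 3 * p.1 - s * p.2) * (1 - 3 * p.1 - s * p.2) := rfl
  set x := p.1
  set y := p.2
  rw [hf]
  have hne : (1 + 2 * s * y) * (1 + 3 * x - s * y) * (1 - 3 * x - s * y) ≠ 0 := hf ▸ hp.ne'
  exact frac_helper _ _ _ _ _ (pow_ne_zero 2 hne) (by linear_combination ((-1296 : ℝ) * y ^ 2 + (7776 : ℝ) * y ^ 4 * s ^ 2 + (-5184 : ℝ) * y ^ 5 * s ^ 3 + (-11664 : ℝ) * y ^ 6 * s ^ 4 + (15552 : ℝ) * y ^ 7 * s ^ 5 + (-5184 : ℝ) * y ^ 8 * s ^ 6 + (-1296 : ℝ) * x ^ 2 + (5832 : ℝ) * x ^ 2 * y ^ 2 + (7776 : ℝ) * x ^ 2 * y ^ 2 * s ^ 2 + (11664 : ℝ) * x ^ 2 * y ^ 3 *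 s ^ 1 + (-5184 : ℝ) * x ^ 2 * y ^ 3 * s ^ 3 + (-17496 : ℝ) * x ^ 2 * y ^ 4 * s ^ 2 + (-11664 : ℝ) * x ^ 2 * y ^ 4 * s ^ 4 + (-23328 : ℝ) * x ^ 2 * y ^ 5 * s ^ 3 + (15552 : ℝ) * x ^ 2 * y ^ 5 * s ^ 5 + (23328 : ℝ) * x ^ 2 * y ^ 6 * s ^ 4 + (-5184 : ℝ) * x ^ 2 * y ^ 6 * s ^ 6 + (5832 : ℝ) * x ^ 4 + (11664 : ℝ) * x ^ 4 * y ^ 1 * s ^ 1 + (52488 : ℝ) * x ^ 4 * y ^ 2 + (-17496 : ℝ) * x ^ 4 * y ^ 2 * s ^ 2 + (209952 : ℝ) * x ^ 4 * y ^ 3 * s ^ 1 + (-23328 : ℝ) * x ^ 4 * y ^ 3 * s ^ 3 + (209952 : ℝ) * x ^ 4 * y ^ 4 * s ^ 2 + (23328 : ℝ) * x ^ 4 * y ^ 4 * s ^ 4 + (52488 : ℝ) * x ^ 6 + (209952 : ℝ) * x ^ 6 * y ^ 1 * s ^ 1 + (209952 : ℝ) * x ^ 6 * y ^ 2 * s ^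 2) * hs)
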